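/- arXiv:2006.07227 — 3 statements merged into one kernel-verified Lean document; each statement's English description precedes it below -/
import Mathlib

section
/- Let Q ∈ Sym(ℝ²) be a sign-indefinite symmetric 2×2 real matrix (i.e., Q has one positive and one negative eigenvalue). Then there exist vectors θ₁, θ₂ ∈ ℝ² \ {0}, with θ₂ not a scalar multiple of θ₁, such that Q = θ₁θ₂ᵀ + θ₂θ₁ᵀ. -/
open Matrix

/-- Any sign-indefinite symmetric 2×2 real matrix `Q` (i.e., one taking both
positive and negative values as a quadratic form, equivalently having one
positive and one negative eigenvalue) can be written as
`Q = θ₁θ₂ᵀ + θ₂θ₁ᵀ` with `θ₁, θ₂ ≠ 0` and `θ₂` not a scalar multiple of `θ₁`. -/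
theorem stmt_6 (Q : Matrix (Fin 2) (Fin 2) ℝ) (hQ : Q.IsSymm)
    (hpos : ∃ x : Fin 2 → ℝ, 0 < x ⬝ᵥ (Q *ᵥ x))
    (hneg : ∃ y : Fin 2 → ℝ, y ⬝ᵥ (Q *ᵥ y) < 0) :
    ∃ θ₁ θ₂ : Fin 2 → ℝ, θ₁ ≠ 0 ∧ θ₂ ≠ 0 ∧ (∀ c : ℝ, θ₂ ≠ c • θ₁) ∧
      Q = vecMulVec θ₁ θ₂ + vecMulVec θ₂ θ₁ := by
  obtain ⟨x, hx⟩ := hpos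
  obtain ⟨y, hy⟩ := hneg
  set a := Q 0 0 with ha
  set b := Q 0 1 with hb
  set c := Q 1 1 with hc
  have hsym : Q 1 0 = b := by
    rw [hb]; conv_lhs => rw [← hQ]
    rfl
  have hxq : x ⬝ᵥ (Q *ᵥ x) = a * x 0 * x 0 + 2 * b * x 0 * x 1 + c * x 1 * x 1 := by
    simp [dotProduct, mulVec, Fin.sum_univ_two, ← ha, ← hb, ← hc, hsym]; ring
  have hyq : y ⬝ᵥ (Q *ᵥ y) = a * y 0 * y 0 + 2 * b * y 0 * y 1 + c * y 1 * y 1 := by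
    simp [dotProduct, mulVec, Fin.sum_univ_two, ← ha, ← hb, ← hc, hsym]; ring
  rw [hxq] at hx; rw [hyq] at hy
  have hdet : 0 < b ^ 2 - a * c := by
    by_contra h
    push_neg at h
    nlinarith [sq_nonneg (x 0 * y 1 - x 1 * y 0),
      sq_nonneg (a * x 0 * y 0 + b * (x 0 * y 1 + x 1 * y 0) + c * x 1 * y 1),
      mul_neg_of_pos_of_neg hx hy]
  have hQeq : ∀ (θ₁ θ₂ : Fin 2 → ℝ),
      (θ₁ 0 * θ₂ 0 + θ₂ 0 * θ₁ 0 = a) → (θ₁ 0 * θ₂ 1 + θ₂ 0 * θ₁ 1 = b) →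
      (θ₁ 1 * θ₂ 1 + θ₂ 1 * θ₁ 1 = c) →
      Q = vecMulVec θ₁ θ₂ + vecMulVec θ₂ θ₁ := by
    intro θ₁ θ₂ h00 h01 h11
    ext i j
    fin_cases i <;> fin_cases j <;>
      simp only [Matrix.add_apply, vecMulVec_apply]
    · exact h00.symm
    · exact h01.symm
    · show Q 1 0 = θ₁ 1 * θ₂ 0 + θ₂ 1 * θ₁ 0
      rw [hsym, ← h01]; ring
    · exact h11.symm
  rcases eq_or_ne a 0 with haz | haz
  · rcases eq_or_ne c 0 with hcz | hcz
    · -- a = 0, c = 0, b ≠ 0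
      have hbz : b ≠ 0 := by
        intro h; rw [haz, hcz, h] at hdet; norm_num at hdet
      refine ⟨![1, 0], ![0, b], ?_, ?_, ?_, ?_⟩
      · intro h; have := congrFun h 0; norm_num at this
      · intro h; have := congrFun h 1; simp at this; exact hbz this
      · intro k h; have := congrFun h 1; simp at this; exact hbz this
      · apply hQeq <;> simp [haz, hcz]
    · -- a = 0, c ≠ 0, b ≠ 0
      have hbz : b ≠ 0 := by
        intro h; rw [haz, h] at hdet; norm_num at hdet
      refine ⟨![2 * b / c, 1], ![0, c / 2], ?_, ?_, ?_, ?_⟩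
      · intro h; have := congrFun h 1; norm_num at this
      · intro h; have := congrFun h 1; simp at this
        exact hcz (by linarith)
      · intro k h
        have h0 := congrFun h 0
        have h1 := congrFun h 1
        simp only [Matrix.cons_val_zero, Matrix.cons_val_one, Matrix.head_cons,
          Pi.smul_apply, smul_eq_mul, mul_one] at h0 h1
        apply hbz
        rw [← h1] at h0
        field_simp at h0
        tauto
      · apply hQeq
        · simp only [Matrix.cons_val_zero, Matrix.cons_val_one, Matrix.head_cons]
          simp [haz]
        · simp only [Matrix.cons_val_zero, Matrix.cons_val_one, Matrix.head_cons]
          field_simp; ring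
        · simp only [Matrix.cons_val_zero, Matrix.cons_val_one, Matrix.head_cons]
          ring
  · -- a ≠ 0
    set d := Real.sqrt (b ^ 2 - a * c) with hd
    have hdpos : 0 < d := Real.sqrt_pos.mpr hdet
    have hdsq : d ^ 2 = b ^ 2 - a * c := Real.sq_sqrt hdet.le
    set t := (b + d) / a with ht
    have hat : a * t = b + d := by rw [ht]; field_simp
    have hquad : a * t ^ 2 - 2 * b * t + c = 0 := by
      have h1 : a * (a * t ^ 2 - 2 * b * t + c) = (a * t) ^ 2 - 2 * b * (a * t) + a * c := by ring
      have h2 : (a * t) ^ 2 - 2 * b * (a * t) + a * c = 0 := by rw [hat]; nlinarith [hdsq]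
      have := h1.trans h2
      rcases mul_eq_zero.mp this with h | h
      · exact absurd h haz
      · exact h
    refine ⟨![1, t], ![a / 2, b - t * a / 2], ?_, ?_, ?_, ?_⟩
    · intro h; have := congrFun h 0; norm_num at this
    · intro h; have := congrFun h 0; simp at this
      exact haz (by linarith)
    · intro k h
      have h0 := congrFun h 0
      have h1 := congrFun h 1
      simp at h0 h1
      rw [← h0] at h1
      -- h1 : b - t * a / 2 = a / 2 * t, so b = a * t = b + d, d = 0
      have : b = a * t := by linarith
      rw [hat] at this
      linarith
    · apply hQeq
      · simp only [Matrix.cons_val_zero, Matrix.cons_val_one, Matrix.head_cons]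
        ring
      · simp only [Matrix.cons_val_zero, Matrix.cons_val_one, Matrix.head_cons]
        ring
      · simp only [Matrix.cons_val_zero, Matrix.cons_val_one, Matrix.head_cons]
        nlinarith [hquad]
end

section
/- Let V₁,…,V_K : D → ℝ be continuous on an open set D ⊆ ℝⁿ and V ∈ Mm(V₁,…,V_K). For each x ∈ D, the essentially-active index set α_V(x) is nonempty, and there exists a neighborhood U of x such that for every z ∈ U there is ℓ_z ∈ α_V(x) with V(z) = V_{ℓ_z}(z). -/
/-- Lemma 4.1: for a max-min combination `V` of continuous functions on an open
set `D`, at each `x ∈ D` the essentially-active index set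
`α_V(x) = {ℓ : x ∈ closure (interior (C ℓ))}` is nonempty, and on some
neighborhood `U ⊆ D` of `x` the function `V` is locally described by its
essentially-active components: every `z ∈ U` satisfies `V z = Vb ℓ_z z` for
some `ℓ_z ∈ α_V(x)`. -/
theorem stmt_11 {n K J : ℕ} (hJ : 0 < J)
    (D : Set (Fin n → ℝ)) (hD : IsOpen D)
    (Vb : Fin K → (Fin n → ℝ) → ℝ) (hVb : ∀ k, ContinuousOn (Vb k) D)
    (S : Fin J → Finset (Fin K)) (hS : ∀ j, (S j).Nonempty)
    (V : (Fin n → ℝ) → ℝ)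
    (hV : ∀ x, V x = Finset.univ.sup'
        (Finset.univ_nonempty_iff.mpr (Fin.pos_iff_nonempty.mp hJ))
        (fun j => (S j).inf' (hS j) (fun k => Vb k x)))
    (x : Fin n → ℝ) (hx : x ∈ D) :
    {ℓ : Fin K | x ∈ closure (interior {z | z ∈ D ∧ V z = Vb ℓ z})}.Nonempty
    ∧ ∃ U ∈ nhds x, U ⊆ D ∧ ∀ z ∈ U,
        ∃ ℓ, x ∈ closure (interior {w | w ∈ D ∧ V w = Vb ℓ w}) ∧ V z = Vb ℓ z := by
  classical
  set C : Fin K → Set (Fin n → ℝ) := fun ℓ => {z | z ∈ D ∧ V z = Vb ℓ z} with hCdef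
  -- V is continuous on D
  have hVc : ContinuousOn V D := by
    have h : ContinuousOn (fun z => Finset.univ.sup'
        (Finset.univ_nonempty_iff.mpr (Fin.pos_iff_nonempty.mp hJ))
        (fun j => (S j).inf' (hS j) (fun k => Vb k z))) D := by
      apply ContinuousOn.finset_sup'_apply
      intro j _
      exact ContinuousOn.finset_inf'_apply (hS j) (fun k _ => hVb k)
    exact h.congr (fun z _ => hV z)
  -- every point of D is active for some index
  have hact : ∀ z ∈ D, ∃ ℓ, V z = Vb ℓ z := by
    intro z _
    obtain ⟨j, -, hj⟩ := Finset.exists_mem_eq_sup'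
      (Finset.univ_nonempty_iff.mpr (Fin.pos_iff_nonempty.mp hJ))
      (fun j => (S j).inf' (hS j) (fun k => Vb k z))
    obtain ⟨k, -, hk⟩ := Finset.exists_mem_eq_inf' (hS j) (fun k => Vb k z)
    exact ⟨k, by rw [hV z, hj, hk]⟩
  -- C ℓ is relatively closed in D
  have hrel : ∀ ℓ, ∀ z ∈ D, z ∈ closure (C ℓ) → z ∈ C ℓ := by
    intro ℓ z hzD hz
    refine ⟨hzD, ?_⟩
    have hne : (nhdsWithin z (C ℓ)).NeBot := mem_closure_iff_nhdsWithin_neBot.mp hz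
    have h1 : Filter.Tendsto V (nhdsWithin z (C ℓ)) (nhds (V z)) :=
      ((hVc z hzD).mono (fun w hw => hw.1))
    have h2 : Filter.Tendsto (Vb ℓ) (nhdsWithin z (C ℓ)) (nhds (Vb ℓ z)) :=
      ((hVb ℓ z hzD).mono (fun w hw => hw.1))
    have heq : V =ᶠ[nhdsWithin z (C ℓ)] Vb ℓ :=
      eventually_nhdsWithin_of_forall (fun w hw => hw.2)
    have h3 : Filter.Tendsto V (nhdsWithin z (C ℓ)) (nhds (Vb ℓ z)) :=
      Filter.Tendsto.congr' heq.symm h2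
    exact tendsto_nhds_unique h1 h3
  -- Baire step: every point of D is in the closure of the interior of some C ℓ
  have step1 : ∀ y ∈ D, ∃ ℓ, y ∈ closure (interior (C ℓ)) := by
    intro y hy
    obtain ⟨r, hr, hball⟩ := Metric.isOpen_iff.mp hD y hy
    have hrr : 0 < r / 2 := by linarith
    have hcb : Metric.closedBall y (r / 2) ⊆ D := fun w hw => by
      apply hball
      have := Metric.mem_closedBall.mp hw
      exact Metric.mem_ball.mpr (by linarith)
    set f : Option (Fin K) → Set (Fin n → ℝ) := fun i =>
      match i with
      | none => (Metric.ball y (r / 2))ᶜ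
      | some ℓ => C ℓ ∩ Metric.closedBall y (r / 2) with hfdef
    have hc : ∀ i, IsClosed (f i) := by
      rintro (_ | ℓ)
      · exact Metric.isOpen_ball.isClosed_compl
      · apply isClosed_of_closure_subset
        intro w hw
        have hwcb : w ∈ Metric.closedBall y (r / 2) :=
          (Metric.isClosed_closedBall.closure_subset_iff.mpr
            (Set.inter_subset_right)) hw
        have hwC : w ∈ closure (C ℓ) :=
          closure_mono Set.inter_subset_left hw
        exact ⟨hrel ℓ w (hcb hwcb) hwC, hwcb⟩
    have hU : ⋃ i, f i = Set.univ := by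
      ext w
      simp only [Set.mem_iUnion, Set.mem_univ, iff_true]
      by_cases hw : w ∈ Metric.ball y (r / 2)
      · have hwcb : w ∈ Metric.closedBall y (r / 2) := Metric.ball_subset_closedBall hw
        obtain ⟨ℓ, hℓ⟩ := hact w (hcb hwcb)
        exact ⟨some ℓ, ⟨hcb hwcb, hℓ⟩, hwcb⟩
      · exact ⟨none, hw⟩
    have hdense := dense_iUnion_interior_of_closed hc hU
    have hyc : y ∈ closure (⋃ ℓ, interior (C ℓ)) := by
      rw [mem_closure_iff]
      intro O hO hyO
      have hO' : IsOpen (O ∩ Metric.ball y (r / 2)) := hO.inter Metric.isOpen_ball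
      have hyO' : y ∈ O ∩ Metric.ball y (r / 2) :=
        ⟨hyO, Metric.mem_ball_self hrr⟩
      obtain ⟨w, hwO, hwT⟩ := (mem_closure_iff.mp (hdense y))
        (O ∩ Metric.ball y (r / 2)) hO' hyO'
      obtain ⟨i, hwi⟩ := Set.mem_iUnion.mp hwT
      match i with
      | none => exact absurd (interior_subset hwi) (not_not.mpr hwO.2)
      | some ℓ =>
        exact ⟨w, hwO.1, Set.mem_iUnion.mpr ⟨ℓ,
          interior_mono Set.inter_subset_left hwi⟩⟩
    rw [closure_iUnion_of_finite] at hyc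
    exact Set.mem_iUnion.mp hyc
  -- assemble
  obtain ⟨ℓ₀, hℓ₀⟩ := step1 x hx
  refine ⟨⟨ℓ₀, hℓ₀⟩, ?_⟩
  set A : Set (Fin K) := {ℓ | x ∈ closure (interior (C ℓ))} with hAdef
  set N : Set (Fin n → ℝ) := ⋃ ℓ : {ℓ // ℓ ∉ A}, closure (interior (C ℓ.1)) with hNdef
  have hNc : IsClosed N := isClosed_iUnion_of_finite (fun ℓ => isClosed_closure)
  have hxN : x ∉ N := by
    intro hxn
    obtain ⟨⟨ℓ, hℓ⟩, hmem⟩ := Set.mem_iUnion.mp hxn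
    exact hℓ hmem
  refine ⟨D ∩ Nᶜ, (hD.inter hNc.isOpen_compl).mem_nhds ⟨hx, hxN⟩,
    Set.inter_subset_left, ?_⟩
  intro z hz
  obtain ⟨ℓ, hℓ⟩ := step1 z hz.1
  have hℓA : ℓ ∈ A := by
    by_contra hcon
    exact hz.2 (Set.mem_iUnion.mpr ⟨⟨ℓ, hcon⟩, hℓ⟩)
  have hzC : z ∈ C ℓ :=
    hrel ℓ z hz.1 (closure_mono interior_subset hℓ)
  exact ⟨ℓ, hℓA, hzC.2⟩
end

section
/- Let Q = diag(1,1,-1), A₁ = [[-0.1,-1,0],[1,-0.1,0],[0,0,0.2]], A₂ = [[-0.2,1,0.1],[-1,-0.2,0],[0.1,0,-0.1]]. Then for every nonzero z ∈ ℝ³ with zᵀQz = 0 (i.e., z₃² = z₁² + z₂²), one has (zᵀQA₁z)·(zᵀQA₂z) > 0. -/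
open Matrix

/-- No-sliding condition for Example 6.2: on the cone `zᵀQz = 0` (i.e.
`z₃² = z₁² + z₂²`), `z ≠ 0`, the quantities `zᵀQA₁z` and `zᵀQA₂z` have the
same strict sign: their product is positive. -/
theorem stmt_16
    (Q A₁ A₂ : Matrix (Fin 3) (Fin 3) ℝ)
    (hQ : Q = !![(1 : ℝ), 0, 0; 0, 1, 0; 0, 0, -1])
    (hA₁ : A₁ = !![(-0.1 : ℝ), -1, 0; 1, -0.1, 0; 0, 0, 0.2])
    (hA₂ : A₂ = !![(-0.2 : ℝ), 1, 0.1; -1, -0.2, 0; 0.1, 0, -0.1])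
    (z : Fin 3 → ℝ) (hz : z ≠ 0) (hcone : z ⬝ᵥ (Q *ᵥ z) = 0) :
    0 < (z ⬝ᵥ (Q *ᵥ (A₁ *ᵥ z))) * (z ⬝ᵥ (Q *ᵥ (A₂ *ᵥ z))) := by
  subst hQ hA₁ hA₂
  simp only [dotProduct, mulVec, Fin.sum_univ_three, Matrix.cons_val', Matrix.cons_val_zero,
    Matrix.cons_val_one, Matrix.head_cons, Matrix.empty_val', Matrix.cons_val_fin_one,
    Matrix.cons_val_two, Matrix.tail_cons, Matrix.head_fin_const] at hcone ⊢
  norm_num [Matrix.vecHead, Matrix.vecTail] at hcone ⊢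
  simp [Fin.isValue] at hcone ⊢
  have h2 : z 2 ≠ 0 := by
    intro h
    apply hz
    funext i
    fin_cases i <;> simp <;> nlinarith [sq_nonneg (z 0), sq_nonneg (z 1), sq_nonneg (z 2)]
  have h2p : 0 < (z 2) ^ 2 := by positivity
  nlinarith [sq_nonneg (z 2), sq_nonneg (z 2 * z 2), h2p]
end
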